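/- Let $g$ be an impact graph with positive probability for a max-linear Bayesian network, with root set $R$ and impact exchange matrix $M$. Then for every innovation vector $z$ in the event $\{G(z)=g\}$, the restriction $z_R=(z_r)_{r\in R}$ satisfies $M\odot z_R \le z_R$ entrywise. -/

import Mathlib

open scoped NNReal

noncomputable section

open MeasureTheory ProbabilityTheory

/-- Max-times matrix-vector product: `(A ⊙ x) i = max_j (A i j * x j)`. -/
def maxMul {d : ℕ} (A : Matrix (Fin d) (Fin d) ℝ≥0) (x : Fin d → ℝ≥0) : Fin d → ℝ≥0 :=
  fun i => Finset.univ.sup fun j => A i j * x j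

/-- Max-times matrix product. -/
def maxMatMul {d : ℕ} (A B : Matrix (Fin d) (Fin d) ℝ≥0) : Matrix (Fin d) (Fin d) ℝ≥0 :=
  Matrix.of fun i j => Finset.univ.sup fun l => A i l * B l j

/-- Max-times matrix powers, with `A^{⊙0}` the identity matrix. -/
def maxPow {d : ℕ} (A : Matrix (Fin d) (Fin d) ℝ≥0) : ℕ → Matrix (Fin d) (Fin d) ℝ≥0
  | 0 => Matrix.of fun i j => if i = j then 1 else 0
  | k + 1 => maxMatMul A (maxPow A k)

/-- Kleene star `C^* = I ∨ C ∨ C^{⊙2} ∨ ⋯ ∨ C^{⊙(d-1)}` over the max-times semiring. -/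
def kleene {d : ℕ} (C : Matrix (Fin d) (Fin d) ℝ≥0) : Matrix (Fin d) (Fin d) ℝ≥0 :=
  Matrix.of fun i j => (Finset.range d).sup fun k => maxPow C k i j

/-- The support digraph of `C` (edge `j → i` iff `C i j ≠ 0`) has no directed cycle. -/
def SupportAcyclic {d : ℕ} (C : Matrix (Fin d) (Fin d) ℝ≥0) : Prop :=
  ¬ ∃ (r : ℕ) (c : Fin (r + 1) → Fin d), Function.Injective c ∧ ∀ t, C (c (t + 1)) (c t) ≠ 0

/-- Edge `j → i` of the impact graph of the innovation vector `z`: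
`i ≠ j` and `X i = c^*_{ij} * z j`, where `X = C^* ⊙ z`. -/
def impactEdge {d : ℕ} (C : Matrix (Fin d) (Fin d) ℝ≥0) (z : Fin d → ℝ≥0) (i j : Fin d) : Prop :=
  i ≠ j ∧ maxMul (kleene C) z i = kleene C i j * z j

open Classical in
/-- The impact exchange matrix `M(g, C^*)` of a graph `g` (edge `j → i` encoded as `g i j`),
defined on the root set of `g` and padded by zeros elsewhere:
`m_{r r'} = max_{i ∈ ch_g(r)} Cs i r' / Cs i r` for distinct roots `r ≠ r'`. -/
noncomputable def exchangeMatrix {d : ℕ} (Cs : Matrix (Fin d) (Fin d) ℝ≥0)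
    (g : Fin d → Fin d → Prop) : Matrix (Fin d) (Fin d) ℝ≥0 :=
  Matrix.of fun r r' =>
    if r ≠ r' ∧ (∀ j, ¬ g r j) ∧ (∀ j, ¬ g r' j) then
      Finset.univ.sup fun i => if g i r then Cs i r' / Cs i r else 0
    else 0

/-- If `g` is an impact graph with positive probability, with impact exchange matrix `M`,
then for every innovation vector `z` in the event `{G(z) = g}` we have `M ⊙ z_R ≤ z_R`
entrywise on the root set `R` (the exchange matrix is padded by zeros off `R`). -/
theorem stmt10 {d : ℕ} (C : Matrix (Fin d) (Fin d) ℝ≥0) (hC : SupportAcyclic C)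
    {Ω : Type*} [MeasurableSpace Ω] (μ : Measure Ω) [IsProbabilityMeasure μ]
    (Z : Fin d → Ω → ℝ≥0) (hmeas : ∀ i, Measurable (Z i))
    (hindep : iIndepFun Z μ)
    (hpos : ∀ i ω, 0 < Z i ω)
    (hatom : ∀ i (c : ℝ≥0), μ {ω | Z i ω = c} = 0)
    (g : Fin d → Fin d → Prop)
    (hg : μ {ω | ∀ i j, impactEdge C (fun k => Z k ω) i j ↔ g i j} ≠ 0) :
    ∀ z : Fin d → ℝ≥0, (∀ i, 0 < z i) → (∀ i j, impactEdge C z i j ↔ g i j) →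
      ∀ r, maxMul (exchangeMatrix (kleene C) g) z r ≤ z r := by
  classical
  intro z hz hiff r
  unfold maxMul
  apply Finset.sup_le
  intro r' _
  unfold exchangeMatrix
  simp only [Matrix.of_apply]
  split_ifs with h
  · rw [← le_div_iff₀ (hz r')]
    apply Finset.sup_le
    intro i _
    rw [le_div_iff₀ (hz r')]
    split_ifs with hgi
    · obtain ⟨_, hX⟩ := (hiff i r).mpr hgi
      have hle : kleene C i r' * z r' ≤ kleene C i r * z r := by
        rw [← hX]
        exact Finset.le_sup (f := fun j => kleene C i j * z j) (Finset.mem_univ r')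
      rcases eq_or_ne (kleene C i r) 0 with h0 | h0
      · simp [h0]
      · rw [div_mul_eq_mul_div, div_le_iff₀ (pos_iff_ne_zero.mpr h0)]
        calc kleene C i r' * z r' ≤ kleene C i r * z r := hle
          _ = z r * kleene C i r := mul_comm _ _
    · simp
  · simp

end
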